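/- Let W be a discrete memoryless channel with R_cr < C, Q ∈ P(𝒳) with E_r(R,Q) > 0 for some R > R_∞, and fix r ∈ (R_cr(Q), I(Q;W)). Put ρ := −∂E_r(a,Q)/∂a|_{a=r} ∈ (0,1) and ṽ := ( (1−ρ)/(1+ρ), 1/(1+ρ) ). Then Λ_{1,ρ}(ṽ) = −log P_{X,Y,Z}(S̃_Q) + 2·Λ_ρ(ρ/(1+ρ)). -/

import Mathlib

open Real BigOperators
open scoped Classical

namespace RCB

/-- A probability distribution on a finite alphabet. -/
def IsDist {α : Type*} [Fintype α] (Q : α → ℝ) : Prop :=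
  (∀ a, 0 ≤ Q a) ∧ ∑ a, Q a = 1

/-- A discrete memoryless channel, i.e. a stochastic matrix from `X` to `Y`. -/
def IsChannel {X Y : Type*} [Fintype X] [Fintype Y] (W : X → Y → ℝ) : Prop :=
  (∀ x y, 0 ≤ W x y) ∧ ∀ x, ∑ y, W x y = 1

/-- The Gallager function `E_o(ρ, Q)`. -/
noncomputable def Eo {X Y : Type*} [Fintype X] [Fintype Y]
    (W : X → Y → ℝ) (ρ : ℝ) (Q : X → ℝ) : ℝ :=
  - Real.log (∑ y, (∑ x, Q x * W x y ^ (1 / (1 + ρ))) ^ (1 + ρ))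

/-- The random coding exponent `E_r(R, Q)` for input distribution `Q`. -/
noncomputable def ErQ {X Y : Type*} [Fintype X] [Fintype Y]
    (W : X → Y → ℝ) (R : ℝ) (Q : X → ℝ) : ℝ :=
  sSup ((fun ρ => -ρ * R + Eo W ρ Q) '' Set.Icc (0 : ℝ) 1)

/-- The random coding exponent `E_r(R)`. -/
noncomputable def Er {X Y : Type*} [Fintype X] [Fintype Y]
    (W : X → Y → ℝ) (R : ℝ) : ℝ :=
  sSup {v : ℝ | ∃ Q : X → ℝ, IsDist Q ∧ v = ErQ W R Q}

/-- The mutual information `I(Q; W)` (natural logarithm). -/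
noncomputable def MI {X Y : Type*} [Fintype X] [Fintype Y]
    (W : X → Y → ℝ) (Q : X → ℝ) : ℝ :=
  ∑ x, ∑ y, Q x * W x y * Real.log (W x y / ∑ x', Q x' * W x' y)

/-- The capacity `C = max_Q I(Q;W)`. -/
noncomputable def Capacity {X Y : Type*} [Fintype X] [Fintype Y]
    (W : X → Y → ℝ) : ℝ :=
  sSup {v : ℝ | ∃ Q : X → ℝ, IsDist Q ∧ v = MI W Q}

/-- The critical rate of the input distribution `Q`:
`R_cr(Q) = ∂E_o(ρ,Q)/∂ρ |_{ρ=1}`. -/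
noncomputable def RcrQ {X Y : Type*} [Fintype X] [Fintype Y]
    (W : X → Y → ℝ) (Q : X → ℝ) : ℝ :=
  deriv (fun ρ => Eo W ρ Q) 1

/-- The critical rate of the channel: the largest `R` with
`E_r(R) = -R + max_Q E_o(1,Q)`. -/
noncomputable def Rcr {X Y : Type*} [Fintype X] [Fintype Y]
    (W : X → Y → ℝ) : ℝ :=
  sSup {R : ℝ | Er W R = -R + sSup {v : ℝ | ∃ Q : X → ℝ, IsDist Q ∧ v = Eo W 1 Q}}

/-- The rate `R_∞ = inf {R ≥ 0 : E_SP(R) < ∞}` (finiteness of the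
sphere-packing exponent expressed as boundedness of the family of affine maps). -/
noncomputable def Rinf {X Y : Type*} [Fintype X] [Fintype Y]
    (W : X → Y → ℝ) : ℝ :=
  sInf {R : ℝ | 0 ≤ R ∧
    BddAbove {v : ℝ | ∃ (Q : X → ℝ) (ρ : ℝ), IsDist Q ∧ 0 ≤ ρ ∧ v = -ρ * R + Eo W ρ Q}}

/-- The pair `(Q, W)` is singular if `W(y|x) = W(y|z)` whenever
`Q(x)W(y|x)Q(z)W(y|z) > 0`. -/
def Singular {X Y : Type*} (W : X → Y → ℝ) (Q : X → ℝ) : Prop :=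
  ∀ x y z, 0 < Q x * W x y * (Q z * W z y) → W x y = W z y

/-- `ρ^*_R(Q) = -∂E_r(a,Q)/∂a |_{a=R}`. -/
noncomputable def rhoStarQ {X Y : Type*} [Fintype X] [Fintype Y]
    (W : X → Y → ℝ) (Q : X → ℝ) (R : ℝ) : ℝ :=
  - deriv (fun a => ErQ W a Q) R

/-- The number of messages of an `(N, R)` code: `⌈exp (N R)⌉`. -/
noncomputable def nMsgs (N : ℕ) (R : ℝ) : ℕ := ⌈Real.exp (N * R)⌉₊

/-- The `N`-fold memoryless extension of the channel `W`. -/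
noncomputable def Wn {X Y : Type*} (W : X → Y → ℝ) {N : ℕ}
    (c : Fin N → X) (y : Fin N → Y) : ℝ :=
  ∏ n, W (c n) (y n)

/-- The maximal error probability of the code `(f, φ)` over the `N`-fold
memoryless extension of `W`. -/
noncomputable def Pmax {X Y : Type*} [Fintype X] [Fintype Y] {M N : ℕ}
    (W : X → Y → ℝ) (f : Fin M → Fin N → X) (φ : (Fin N → Y) → Fin M) : ℝ :=
  ⨆ m : Fin M, ∑ y : Fin N → Y, Wn W (f m) y * (if φ y ≠ m then (1 : ℝ) else 0)

/-- The ensemble average error probability `P̄_e(Q, N, R)`: the `⌈exp (N R)⌉`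
codewords are drawn i.i.d. from `Q^N` and decoded by maximum-likelihood
decoding, ties counted as errors. -/
noncomputable def Pbar {X Y : Type*} [Fintype X] [Fintype Y]
    (W : X → Y → ℝ) (Q : X → ℝ) (N : ℕ) (R : ℝ) : ℝ :=
  ∑ c : Fin (nMsgs N R) → Fin N → X,
    (∏ m, ∏ n, Q (c m n)) *
      ((nMsgs N R : ℝ)⁻¹ *
        ∑ m, ∑ y : Fin N → Y,
          Wn W (c m) y *
            (if ∃ m', m' ≠ m ∧ Wn W (c m) y ≤ Wn W (c m') y then (1 : ℝ) else 0))

/-- The tilted output distribution `f_ρ`. -/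
noncomputable def fRho {X Y : Type*} [Fintype X] [Fintype Y]
    (W : X → Y → ℝ) (Q : X → ℝ) (ρ : ℝ) (y : Y) : ℝ :=
  (∑ x, Q x * W x y ^ (1 / (1 + ρ))) ^ (1 + ρ) /
    ∑ b, (∑ a, Q a * W a b ^ (1 / (1 + ρ))) ^ (1 + ρ)

/-- The cumulant generating function
`Λ_ρ(λ) = log E_{P_{X,Y}}[exp(λ log (f_ρ(Y)/W(Y|X)))]` with `P_{X,Y} = Q × W`. -/
noncomputable def Lam {X Y : Type*} [Fintype X] [Fintype Y]
    (W : X → Y → ℝ) (Q : X → ℝ) (ρ : ℝ) (t : ℝ) : ℝ :=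
  Real.log (∑ x, ∑ y, Q x * W x y * Real.exp (t * Real.log (fRho W Q ρ y / W x y)))

/-- `P_{X,Y,Z}(S̃_Q)` where `P_{X,Y,Z}(x,y,z) = Q(x)W(y|x)Q(z)` and
`S̃_Q = {(x,y,z) : Q(x)W(y|x)Q(z)W(y|z) > 0}`. -/
noncomputable def PStilde {X Y : Type*} [Fintype X] [Fintype Y]
    (W : X → Y → ℝ) (Q : X → ℝ) : ℝ :=
  ∑ x, ∑ y, ∑ z,
    if 0 < Q x * W x y * (Q z * W z y) then Q x * W x y * Q z else 0

/-- The bivariate cumulant generating function `Λ_{1,ρ}(v)` with respect to the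
conditional distribution `P̃_{X,Y,Z}` of `P_{X,Y,Z}` given `S̃_Q`. -/
noncomputable def Lam1 {X Y : Type*} [Fintype X] [Fintype Y]
    (W : X → Y → ℝ) (Q : X → ℝ) (ρ : ℝ) (v : ℝ × ℝ) : ℝ :=
  Real.log ((∑ x, ∑ y, ∑ z,
    if 0 < Q x * W x y * (Q z * W z y) then
      Q x * W x y * Q z *
        Real.exp (v.1 * Real.log (W x y / fRho W Q ρ y) +
          v.2 * Real.log (W z y / W x y))
    else 0) / PStilde W Q)

/-- The subdifferential of `f : ℝ → ℝ` at `R` (for convex `f`). -/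
def Subderiv (f : ℝ → ℝ) (R : ℝ) : Set ℝ :=
  {g : ℝ | ∀ x, f R + g * (x - R) ≤ f x}

/-- The tilted backward channel `P^ρ_{X|Y}`. -/
noncomputable def PXgY {X Y : Type*} [Fintype X]
    (W : X → Y → ℝ) (Q : X → ℝ) (ρ : ℝ) (x : X) (y : Y) : ℝ :=
  Q x * W x y ^ (1 / (1 + ρ)) / ∑ a, Q a * W a y ^ (1 / (1 + ρ))

/-- The tilted joint distribution `P^ρ_{X,Y}(x,y) = P^ρ_{X|Y}(x|y) P^ρ_Y(y)`. -/
noncomputable def PXY {X Y : Type*} [Fintype X] [Fintype Y]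
    (W : X → Y → ℝ) (Q : X → ℝ) (ρ : ℝ) (x : X) (y : Y) : ℝ :=
  PXgY W Q ρ x y * fRho W Q ρ y


lemma exists_pos_dist {α : Type*} [Fintype α] {Q : α → ℝ} (hQ : IsDist Q) :
    ∃ a, 0 < Q a := by
  by_contra h
  push_neg at h
  have h1 : ∑ a, Q a ≤ 0 := Finset.sum_nonpos fun a _ => h a
  rw [hQ.2] at h1
  linarith

lemma eo_continuousOn {X Y : Type*} [Fintype X] [Fintype Y]
    (W : X → Y → ℝ) (hW : IsChannel W) (Q : X → ℝ) (hQ : IsDist Q) :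
    ContinuousOn (fun ρ => Eo W ρ Q) (Set.Icc (0:ℝ) 1) := by
  have hden : ∀ ρ ∈ Set.Icc (0:ℝ) 1, (1:ℝ) + ρ ≠ 0 := by
    intro ρ hρ; have := hρ.1; intro h; linarith
  have hexp : ContinuousOn (fun ρ : ℝ => 1 / (1 + ρ)) (Set.Icc (0:ℝ) 1) :=
    ContinuousOn.div continuousOn_const (by fun_prop) hden
  have hin : ∀ y, ContinuousOn (fun ρ : ℝ => ∑ x, Q x * W x y ^ (1 / (1 + ρ)))
      (Set.Icc (0:ℝ) 1) := by
    intro y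
    apply continuousOn_finset_sum
    intro x _
    apply ContinuousOn.mul continuousOn_const
    apply ContinuousOn.rpow continuousOn_const hexp
    intro ρ hρ
    right
    have := hρ.1
    positivity
  have hF : ContinuousOn (fun ρ : ℝ =>
      ∑ y, (∑ x, Q x * W x y ^ (1 / (1 + ρ))) ^ (1 + ρ)) (Set.Icc (0:ℝ) 1) := by
    apply continuousOn_finset_sum
    intro y _
    apply ContinuousOn.rpow (hin y) (by fun_prop)
    intro ρ hρ
    right
    have := hρ.1
    linarith
  have hFpos : ∀ ρ ∈ Set.Icc (0:ℝ) 1,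
      0 < ∑ y, (∑ x, Q x * W x y ^ (1 / (1 + ρ))) ^ (1 + ρ) := by
    intro ρ hρ
    obtain ⟨x0, hx0⟩ := exists_pos_dist hQ
    obtain ⟨y0, hy0⟩ : ∃ y, 0 < W x0 y := by
      by_contra h
      push_neg at h
      have h1 : ∑ y, W x0 y ≤ 0 := Finset.sum_nonpos fun a _ => h a
      rw [hW.2 x0] at h1; linarith
    have hg0 : ∀ y, (0:ℝ) ≤ ∑ x, Q x * W x y ^ (1 / (1 + ρ)) := fun y =>
      Finset.sum_nonneg fun x _ => mul_nonneg (hQ.1 x) (Real.rpow_nonneg (hW.1 x y) _)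
    have hgy0 : 0 < ∑ x, Q x * W x y0 ^ (1 / (1 + ρ)) := by
      refine lt_of_lt_of_le (mul_pos hx0 (Real.rpow_pos_of_pos hy0 (1/(1+ρ)))) ?_
      exact Finset.single_le_sum (fun x _ => mul_nonneg (hQ.1 x) (Real.rpow_nonneg (hW.1 x _) _)) (Finset.mem_univ x0)
    refine lt_of_lt_of_le (Real.rpow_pos_of_pos hgy0 (1+ρ)) ?_
    exact Finset.single_le_sum (fun y _ => Real.rpow_nonneg (hg0 y) _) (Finset.mem_univ y0)
  have := (hF.log (fun ρ hρ => (hFpos ρ hρ).ne')).neg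
  exact this

lemma erq_bounds {X Y : Type*} [Fintype X] [Fintype Y]
    (W : X → Y → ℝ) (hW : IsChannel W) (Q : X → ℝ) (hQ : IsDist Q)
    {a b : ℝ} (hab : a ≤ b) :
    ErQ W b Q ≤ ErQ W a Q ∧ ErQ W a Q ≤ ErQ W b Q + (b - a) := by
  have hc := eo_continuousOn W hW Q hQ
  have hne : (Set.Icc (0:ℝ) 1).Nonempty := ⟨0, by simp⟩
  have hca : ∀ c : ℝ, ContinuousOn (fun ρ : ℝ => -ρ * c + Eo W ρ Q) (Set.Icc (0:ℝ) 1) :=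
    fun c => ContinuousOn.add (by fun_prop) hc
  have hbdd : ∀ c, BddAbove ((fun ρ : ℝ => -ρ * c + Eo W ρ Q) '' Set.Icc (0:ℝ) 1) :=
    fun c => ((isCompact_Icc).image_of_continuousOn (hca c)).bddAbove
  have hnI : ∀ c : ℝ, ((fun ρ : ℝ => -ρ * c + Eo W ρ Q) '' Set.Icc (0:ℝ) 1).Nonempty :=
    fun c => hne.image _
  constructor
  · apply csSup_le (hnI b)
    rintro v ⟨ρ, hρm, rfl⟩
    refine le_trans ?_ (le_csSup (hbdd a) ⟨ρ, hρm, rfl⟩)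
    have h0 := hρm.1
    dsimp only
    nlinarith [mul_nonneg h0 (sub_nonneg.2 hab)]
  · apply csSup_le (hnI a)
    rintro v ⟨ρ, hρm, rfl⟩
    have h1 : -ρ * b + Eo W ρ Q ≤ ErQ W b Q := le_csSup (hbdd b) ⟨ρ, hρm, rfl⟩
    dsimp only
    nlinarith [hρm.2, mul_nonneg (sub_nonneg.2 hρm.2) (sub_nonneg.2 hab)]

lemma rho_mem {X Y : Type*} [Fintype X] [Fintype Y]
    (W : X → Y → ℝ) (hW : IsChannel W) (Q : X → ℝ) (hQ : IsDist Q) (r : ℝ) :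
    - deriv (fun a => ErQ W a Q) r ∈ Set.Icc (0:ℝ) 1 := by
  by_cases hd : DifferentiableAt ℝ (fun a => ErQ W a Q) r
  · have hD := hd.hasDerivAt
    rw [hasDerivAt_iff_tendsto_slope] at hD
    have hD' : Filter.Tendsto (slope (fun a => ErQ W a Q) r) (nhdsWithin r (Set.Ioi r))
        (nhds (deriv (fun a => ErQ W a Q) r)) :=
      hD.mono_left (nhdsWithin_mono r (fun x hx => ne_of_gt hx))
    have hub : ∀ x ∈ Set.Ioi r, slope (fun a => ErQ W a Q) r x ≤ 0 := by
      intro x hx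
      rw [slope_def_field]
      have hb := erq_bounds W hW Q hQ (le_of_lt hx)
      apply div_nonpos_of_nonpos_of_nonneg
      · linarith [hb.1]
      · have : r < x := hx
        linarith
    have hlb : ∀ x ∈ Set.Ioi r, (-1:ℝ) ≤ slope (fun a => ErQ W a Q) r x := by
      intro x hx
      rw [slope_def_field]
      have hb := erq_bounds W hW Q hQ (le_of_lt hx)
      have hxr : (0:ℝ) < x - r := by have : r < x := hx; linarith
      rw [le_div_iff₀ hxr]
      linarith [hb.2]
    have hev : ∀ᶠ x in nhdsWithin r (Set.Ioi r), x ∈ Set.Ioi r := eventually_mem_nhdsWithin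
    constructor
    · have := le_of_tendsto hD' (hev.mono fun x hx => hub x hx)
      simp only [neg_nonneg] at *
      linarith
    · have := ge_of_tendsto hD' (hev.mono fun x hx => hlb x hx)
      linarith
  · rw [deriv_zero_of_not_differentiableAt hd]
    simp

lemma pos_pos_of_mul_pos {a b : ℝ} (ha : 0 ≤ a) (hb : 0 ≤ b) (h : 0 < a * b) :
    0 < a ∧ 0 < b := by
  constructor
  · rcases ha.lt_or_eq with h' | h'
    · exact h'
    · exfalso; rw [← h', zero_mul] at h; exact lt_irrefl 0 h
  · rcases hb.lt_or_eq with h' | h'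
    · exact h'
    · exfalso; rw [← h', mul_zero] at h; exact lt_irrefl 0 h

lemma main_algebra {X Y : Type*} [Fintype X] [Fintype Y]
    (W : X → Y → ℝ) (hW : IsChannel W) (Q : X → ℝ) (hQ : IsDist Q)
    (ρ : ℝ) (hρ0 : 0 ≤ ρ) :
    Lam1 W Q ρ ((1 - ρ) / (1 + ρ), 1 / (1 + ρ)) =
      - Real.log (PStilde W Q) + 2 * Lam W Q ρ (ρ / (1 + ρ)) := by
  have h1ρ : (0:ℝ) < 1 + ρ := by linarith
  have hne : (1:ℝ) + ρ ≠ 0 := ne_of_gt h1ρ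
  set e : ℝ := 1 / (1 + ρ) with he_def
  set t : ℝ := ρ / (1 + ρ) with ht_def
  set v1 : ℝ := (1 - ρ) / (1 + ρ) with hv1_def
  have he0 : 0 < e := by rw [he_def]; positivity
  have hee : e ≠ 0 := ne_of_gt he0
  have het : e = 1 - t := by rw [he_def, ht_def]; field_simp; ring
  have htρ : (1 + ρ) * t = ρ := by rw [ht_def]; field_simp
  have hv1e : 1 + v1 - e = e := by rw [hv1_def, he_def]; field_simp; ring
  have hv1ρ : (1 + ρ) * v1 = 1 - ρ := by rw [hv1_def]; field_simp
  set g : Y → ℝ := fun y => ∑ x, Q x * W x y ^ e with hg_def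
  have hg0 : ∀ y, 0 ≤ g y := fun y =>
    Finset.sum_nonneg fun x _ => mul_nonneg (hQ.1 x) (Real.rpow_nonneg (hW.1 x y) e)
  set G : ℝ := ∑ y, g y ^ (1 + ρ) with hG_def
  have hterm0 : ∀ y, 0 ≤ g y ^ (1 + ρ) := fun y => Real.rpow_nonneg (hg0 y) _
  obtain ⟨x0, hx0⟩ := exists_pos_dist hQ
  obtain ⟨y0, hy0⟩ : ∃ y, 0 < W x0 y := by
    by_contra h
    push_neg at h
    have h1 : ∑ y, W x0 y ≤ 0 := Finset.sum_nonpos fun a _ => h a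
    rw [hW.2 x0] at h1; linarith
  have hgpos : ∀ x y, 0 < Q x → 0 < W x y → 0 < g y := by
    intro x y hx hy
    refine lt_of_lt_of_le (mul_pos hx (Real.rpow_pos_of_pos hy e)) ?_
    exact Finset.single_le_sum
      (fun x' _ => mul_nonneg (hQ.1 x') (Real.rpow_nonneg (hW.1 x' _) e))
      (Finset.mem_univ x)
  have hG : 0 < G := by
    refine lt_of_lt_of_le (Real.rpow_pos_of_pos (hgpos x0 y0 hx0 hy0) (1 + ρ)) ?_
    exact Finset.single_le_sum (fun y _ => hterm0 y) (Finset.mem_univ y0)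
  have hfr : ∀ y, fRho W Q ρ y = g y ^ (1 + ρ) / G := fun y => rfl
  have hfpos : ∀ y, 0 < g y → 0 < fRho W Q ρ y := by
    intro y hy
    rw [hfr]
    exact div_pos (Real.rpow_pos_of_pos hy _) hG
  -- positivity of PStilde
  have hPterm : ∀ (x : X) (y : Y) (z : X),
      0 ≤ (if 0 < Q x * W x y * (Q z * W z y) then Q x * W x y * Q z else 0) := by
    intro x y z
    split
    · exact mul_nonneg (mul_nonneg (hQ.1 x) (hW.1 x y)) (hQ.1 z)
    · exact le_refl _
  have hP : 0 < PStilde W Q := by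
    have hstep : ∀ (x : X) (y : Y), 0 ≤ ∑ z,
        (if 0 < Q x * W x y * (Q z * W z y) then Q x * W x y * Q z else 0) :=
      fun x y => Finset.sum_nonneg fun z _ => hPterm x y z
    have h0 : 0 < ∑ z, (if 0 < Q x0 * W x0 y0 * (Q z * W z y0) then Q x0 * W x0 y0 * Q z else 0) := by
      refine lt_of_lt_of_le ?_ (Finset.single_le_sum (fun z _ => hPterm x0 y0 z) (Finset.mem_univ x0))
      rw [if_pos (mul_pos (mul_pos hx0 hy0) (mul_pos hx0 hy0))]
      positivity
    have h1 : 0 < ∑ y, ∑ z,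
        (if 0 < Q x0 * W x0 y * (Q z * W z y) then Q x0 * W x0 y * Q z else 0) := by
      refine lt_of_lt_of_le h0 (Finset.single_le_sum (fun y _ => hstep x0 y) (Finset.mem_univ y0))
    unfold PStilde
    refine lt_of_lt_of_le h1 (Finset.single_le_sum
      (fun x _ => Finset.sum_nonneg fun y _ => hstep x y) (Finset.mem_univ x0))
  -- the T computation
  have hT : (∑ x, ∑ y, Q x * W x y * Real.exp (t * Real.log (fRho W Q ρ y / W x y)))
      = G ^ e := by
    have step1 : ∀ (x : X) (y : Y),
        Q x * W x y * Real.exp (t * Real.log (fRho W Q ρ y / W x y))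
        = Q x * (W x y ^ e * fRho W Q ρ y ^ t) := by
      intro x y
      rcases (hQ.1 x).lt_or_eq with hQx | hQx
      swap
      · rw [← hQx]; ring
      rcases (hW.1 x y).lt_or_eq with hWx | hWx
      swap
      · rw [← hWx, Real.zero_rpow hee]; ring
      have hgy : 0 < g y := hgpos x y hQx hWx
      have hfy : 0 < fRho W Q ρ y := hfpos y hgy
      have hfW : (0:ℝ) < fRho W Q ρ y / W x y := div_pos hfy hWx
      have h1 : Real.exp (t * Real.log (fRho W Q ρ y / W x y))
          = (fRho W Q ρ y / W x y) ^ t := by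
        rw [Real.rpow_def_of_pos hfW, mul_comm]
      rw [h1, Real.div_rpow (le_of_lt hfy) (le_of_lt hWx)]
      rw [het, Real.rpow_sub hWx, Real.rpow_one]
      field_simp
    calc (∑ x, ∑ y, Q x * W x y * Real.exp (t * Real.log (fRho W Q ρ y / W x y)))
        = ∑ y, ∑ x, Q x * (W x y ^ e * fRho W Q ρ y ^ t) := by
          rw [Finset.sum_comm]
          exact Finset.sum_congr rfl fun y _ => Finset.sum_congr rfl fun x _ => step1 x y
      _ = ∑ y, g y * fRho W Q ρ y ^ t := by
          refine Finset.sum_congr rfl fun y _ => ?_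
          rw [hg_def]
          rw [Finset.sum_mul]
          exact Finset.sum_congr rfl fun x _ => by ring
      _ = ∑ y, g y ^ (1 + ρ) / G ^ t := by
          refine Finset.sum_congr rfl fun y _ => ?_
          rcases (hg0 y).lt_or_eq with h | h
          · rw [hfr, Real.div_rpow (hterm0 y) (le_of_lt hG), ← Real.rpow_mul (hg0 y), htρ]
            rw [show g y ^ (1+ρ) = g y ^ (1:ℝ) * g y ^ ρ by
              rw [← Real.rpow_add h]]
            rw [Real.rpow_one]
            ring
          · rw [← h, Real.zero_rpow hne]
            simp
      _ = G / G ^ t := by rw [← Finset.sum_div]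
      _ = G ^ e := by
          rw [het, Real.rpow_sub hG, Real.rpow_one]
  -- the S computation
  have hS : (∑ x, ∑ y, ∑ z,
      if 0 < Q x * W x y * (Q z * W z y) then
        Q x * W x y * Q z *
          Real.exp (v1 * Real.log (W x y / fRho W Q ρ y) +
            e * Real.log (W z y / W x y))
      else 0) = G ^ e * G ^ e := by
    have stepS : ∀ (x : X) (y : Y) (z : X),
        (if 0 < Q x * W x y * (Q z * W z y) then
          Q x * W x y * Q z *
            Real.exp (v1 * Real.log (W x y / fRho W Q ρ y) +
              e * Real.log (W z y / W x y))
        else 0)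
        = Q x * W x y ^ e * (Q z * W z y ^ e) / fRho W Q ρ y ^ v1 := by
      intro x y z
      split_ifs with hpos
      · have hxy := pos_pos_of_mul_pos
          (mul_nonneg (hQ.1 x) (hW.1 x y)) (mul_nonneg (hQ.1 z) (hW.1 z y)) hpos
        obtain ⟨hQx, hWx⟩ := pos_pos_of_mul_pos (hQ.1 x) (hW.1 x y) hxy.1
        obtain ⟨hQz, hWz⟩ := pos_pos_of_mul_pos (hQ.1 z) (hW.1 z y) hxy.2
        have hgy : 0 < g y := hgpos x y hQx hWx
        have hfy : 0 < fRho W Q ρ y := hfpos y hgy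
        have hWf : (0:ℝ) < W x y / fRho W Q ρ y := div_pos hWx hfy
        have hzx : (0:ℝ) < W z y / W x y := div_pos hWz hWx
        have hexp : Real.exp (v1 * Real.log (W x y / fRho W Q ρ y) +
              e * Real.log (W z y / W x y))
            = (W x y / fRho W Q ρ y) ^ v1 * (W z y / W x y) ^ e := by
          rw [Real.exp_add, Real.rpow_def_of_pos hWf, Real.rpow_def_of_pos hzx,
            mul_comm (Real.log (W x y / fRho W Q ρ y)) v1,
            mul_comm (Real.log (W z y / W x y)) e]
        rw [hexp, Real.div_rpow (le_of_lt hWx) (le_of_lt hfy),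
          Real.div_rpow (le_of_lt hWz) (le_of_lt hWx)]
        have hW1 : W x y * W x y ^ v1 / W x y ^ e = W x y ^ e := by
          rw [show W x y * W x y ^ v1 = W x y ^ (1 + v1) by
            rw [Real.rpow_add hWx, Real.rpow_one]]
          rw [← Real.rpow_sub hWx, hv1e]
        calc Q x * W x y * Q z * (W x y ^ v1 / fRho W Q ρ y ^ v1 * (W z y ^ e / W x y ^ e))
            = (W x y * W x y ^ v1 / W x y ^ e) * Q x * (Q z * W z y ^ e) / fRho W Q ρ y ^ v1 := by
              ring
          _ = Q x * W x y ^ e * (Q z * W z y ^ e) / fRho W Q ρ y ^ v1 := by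
              rw [hW1]; ring
      · -- some factor is zero
        have h0 : Q x * W x y * (Q z * W z y) = 0 := by
          rcases (mul_nonneg (mul_nonneg (hQ.1 x) (hW.1 x y))
            (mul_nonneg (hQ.1 z) (hW.1 z y))).lt_or_eq with h | h
          · exact absurd h hpos
          · exact h.symm
        have : Q x * W x y ^ e * (Q z * W z y ^ e) = 0 := by
          rcases mul_eq_zero.mp h0 with h | h <;>
            rcases mul_eq_zero.mp h with h | h <;>
            simp [h, Real.zero_rpow hee]
        rw [this, zero_div]
    calc (∑ x, ∑ y, ∑ z,
        if 0 < Q x * W x y * (Q z * W z y) then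
          Q x * W x y * Q z *
            Real.exp (v1 * Real.log (W x y / fRho W Q ρ y) +
              e * Real.log (W z y / W x y))
        else 0)
        = ∑ x, ∑ y, ∑ z, Q x * W x y ^ e * (Q z * W z y ^ e) / fRho W Q ρ y ^ v1 := by
          refine Finset.sum_congr rfl fun x _ => Finset.sum_congr rfl fun y _ =>
            Finset.sum_congr rfl fun z _ => stepS x y z
      _ = ∑ y, ∑ x, Q x * W x y ^ e * g y / fRho W Q ρ y ^ v1 := by
          rw [Finset.sum_comm]
          refine Finset.sum_congr rfl fun y _ => Finset.sum_congr rfl fun x _ => ?_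
          rw [← Finset.sum_div, ← Finset.mul_sum]
      _ = ∑ y, g y * g y / fRho W Q ρ y ^ v1 := by
          refine Finset.sum_congr rfl fun y _ => ?_
          rw [← Finset.sum_div, ← Finset.sum_mul]
      _ = ∑ y, g y ^ (1 + ρ) * G ^ v1 := by
          refine Finset.sum_congr rfl fun y _ => ?_
          rcases (hg0 y).lt_or_eq with h | h
          · rw [hfr, Real.div_rpow (hterm0 y) (le_of_lt hG), ← Real.rpow_mul (hg0 y), hv1ρ]
            have hgg : g y * g y / g y ^ (1 - ρ) = g y ^ (1 + ρ) := by
              rw [show g y * g y = g y ^ (2:ℝ) from by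
                  rw [show (2:ℝ) = 1 + 1 by norm_num, Real.rpow_add h, Real.rpow_one],
                ← Real.rpow_sub h]
              congr 1
              ring
            rw [div_div_eq_mul_div, mul_div_right_comm, hgg]
          · rw [← h, Real.zero_rpow hne]
            simp
      _ = G * G ^ v1 := by rw [← Finset.sum_mul]
      _ = G ^ ((1:ℝ) + v1) := by rw [Real.rpow_add hG, Real.rpow_one]
      _ = G ^ e * G ^ e := by
          rw [← Real.rpow_add hG]
          congr 1
          rw [hv1_def, he_def]
          field_simp
          ring
  -- conclusion
  have hGe : (0:ℝ) < G ^ e := Real.rpow_pos_of_pos hG e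
  unfold Lam1 Lam
  simp only
  rw [hS, hT]
  rw [Real.log_div (by positivity) (ne_of_gt hP), Real.log_mul (ne_of_gt hGe) (ne_of_gt hGe)]
  ring

/-- `Λ_{1,ρ}(ṽ) = -log P_{X,Y,Z}(S̃_Q) + 2 Λ_ρ(ρ/(1+ρ))` at
`ṽ = ((1-ρ)/(1+ρ), 1/(1+ρ))`. -/
theorem statement15 {X Y : Type*} [Fintype X] [Fintype Y] [Nonempty X] [Nonempty Y]
    (W : X → Y → ℝ) (hW : IsChannel W) (hcr : Rcr W < Capacity W)
    (Q : X → ℝ) (hQ : IsDist Q)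
    (hEr : ∃ R : ℝ, Rinf W < R ∧ 0 < ErQ W R Q)
    (r : ℝ) (hr1 : RcrQ W Q < r) (hr2 : r < MI W Q)
    (ρ : ℝ) (hρ : ρ = - deriv (fun a => ErQ W a Q) r) :
    Lam1 W Q ρ ((1 - ρ) / (1 + ρ), 1 / (1 + ρ)) =
      - Real.log (PStilde W Q) + 2 * Lam W Q ρ (ρ / (1 + ρ)) := by
  have hmem := rho_mem W hW Q hQ r
  exact main_algebra W hW Q hQ ρ (by rw [hρ]; exact hmem.1)

end RCB
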